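/- arXiv:2212.02991 — 5 statements merged into one kernel-verified Lean document; each statement's English description precedes it below -/
import Mathlib

section
/- Let ρ ∈ C_c(ℝ^n), ρ ≢ 0, be symmetric and positive semi-definite, and assume there exists ρ^{1/2} ∈ C_c(ℝ^n) with ρ = ρ^{1/2} * ρ^{1/2}. On a compact Ω ⊂ ℝ^n, if a sequence of Radon measures μ^k converges weakly-* to μ in M(Ω), then ‖μ^k − μ‖_D → 0, where ‖ν‖_D² := ∫∫ ρ(x−y) dν(x) dν(y). -/
open MeasureTheory Filter BoundedContinuousFunction Pointwise

/-- Integral of a real function against a finite signed (Radon) measure. -/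
noncomputable def sInt {α : Type*} [MeasurableSpace α]
    (μ : SignedMeasure α) (f : α → ℝ) : ℝ :=
  (∫ x, f x ∂μ.toJordanDecomposition.posPart) -
  (∫ x, f x ∂μ.toJordanDecomposition.negPart)

lemma sInt_sub' {α : Type*} [MeasurableSpace α] (a b : SignedMeasure α) (f : α → ℝ)
    (hint : ∀ (P : Measure α), IsFiniteMeasure P → Integrable f P) :
    sInt (a - b) f = sInt a f - sInt b f := by
  set P := (a - b).toJordanDecomposition.posPart with hPdef
  set N := (a - b).toJordanDecomposition.negPart with hNdef
  set aP := a.toJordanDecomposition.posPart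
  set aN := a.toJordanDecomposition.negPart
  set bP := b.toJordanDecomposition.posPart
  set bN := b.toJordanDecomposition.negPart
  have h1 : P.toSignedMeasure - N.toSignedMeasure = a - b := by
    have := (a - b).toSignedMeasure_toJordanDecomposition
    rwa [MeasureTheory.JordanDecomposition.toSignedMeasure] at this
  have h2 : aP.toSignedMeasure - aN.toSignedMeasure = a := by
    have := a.toSignedMeasure_toJordanDecomposition
    rwa [MeasureTheory.JordanDecomposition.toSignedMeasure] at this
  have h3 : bP.toSignedMeasure - bN.toSignedMeasure = b := by
    have := b.toSignedMeasure_toJordanDecomposition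
    rwa [MeasureTheory.JordanDecomposition.toSignedMeasure] at this
  have hkey : (P + (aN + bP)).toSignedMeasure = (N + (aP + bN)).toSignedMeasure := by
    rw [Measure.toSignedMeasure_add, Measure.toSignedMeasure_add,
      Measure.toSignedMeasure_add, Measure.toSignedMeasure_add,
      sub_eq_iff_eq_add.mp h1, sub_eq_iff_eq_add.mp h2, sub_eq_iff_eq_add.mp h3]
    abel
  have hmeq : P + (aN + bP) = N + (aP + bN) :=
    Measure.toSignedMeasure_eq_toSignedMeasure_iff.mp hkey
  have hiP : Integrable f P := hint _ inferInstance
  have hiN : Integrable f N := hint _ inferInstance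
  have hiaP : Integrable f aP := hint _ inferInstance
  have hiaN : Integrable f aN := hint _ inferInstance
  have hibP : Integrable f bP := hint _ inferInstance
  have hibN : Integrable f bN := hint _ inferInstance
  have hI : (∫ x, f x ∂P) + ((∫ x, f x ∂aN) + ∫ x, f x ∂bP)
      = (∫ x, f x ∂N) + ((∫ x, f x ∂aP) + ∫ x, f x ∂bN) := by
    rw [← integral_add_measure hiaN hibP, ← integral_add_measure hiP (hiaN.add_measure hibP),
      ← integral_add_measure hiaP hibN, ← integral_add_measure hiN (hiaP.add_measure hibN), hmeq]
  simp only [sInt]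
  linarith

noncomputable def sIntCLM {X : Type*} [MeasurableSpace X] [TopologicalSpace X]
    [OpensMeasurableSpace X] (ν : SignedMeasure X) : (X →ᵇ ℝ) →L[ℝ] ℝ :=
  LinearMap.mkContinuousOfExistsBound
    { toFun := fun f => sInt ν ⇑f
      map_add' := by
        intro f g
        simp only [sInt, coe_add, Pi.add_apply]
        rw [integral_add (f.integrable _) (g.integrable _),
          integral_add (f.integrable _) (g.integrable _)]
        ring
      map_smul' := by
        intro c f
        simp only [sInt, coe_smul, Pi.smul_apply, RingHom.id_apply]
        rw [integral_smul, integral_smul, smul_sub] }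
    ⟨(ν.toJordanDecomposition.posPart Set.univ).toReal
      + (ν.toJordanDecomposition.negPart Set.univ).toReal, by
      intro f
      simp only [LinearMap.coe_mk, AddHom.coe_mk, sInt]
      set Pv := (ν.toJordanDecomposition.posPart Set.univ).toReal
      set Nv := (ν.toJordanDecomposition.negPart Set.univ).toReal
      have h1 : ‖∫ x, f x ∂ν.toJordanDecomposition.posPart‖ ≤ Pv * ‖f‖ :=
        f.norm_integral_le_mul_norm _
      have h2 : ‖∫ x, f x ∂ν.toJordanDecomposition.negPart‖ ≤ Nv * ‖f‖ :=
        f.norm_integral_le_mul_norm _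
      have h3 := norm_sub_le (∫ x, f x ∂ν.toJordanDecomposition.posPart)
        (∫ x, f x ∂ν.toJordanDecomposition.negPart)
      have : (Pv + Nv) * ‖f‖ = Pv * ‖f‖ + Nv * ‖f‖ := by ring
      linarith⟩

lemma sIntCLM_apply {X : Type*} [MeasurableSpace X] [TopologicalSpace X]
    [OpensMeasurableSpace X] (ν : SignedMeasure X) (f : X →ᵇ ℝ) :
    sIntCLM ν f = sInt ν ⇑f := rfl


/-- The quadratic form `‖ν‖_D² = ∫∫ ρ(x−y) dν(x) dν(y)`. -/
noncomputable def qForm {n : ℕ} (ρ : EuclideanSpace ℝ (Fin n) → ℝ)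
    (ν : SignedMeasure (EuclideanSpace ℝ (Fin n))) : ℝ :=
  sInt ν (fun y => sInt ν (fun x => ρ (x - y)))

/-- with `ρ = ρ^{1/2} * ρ^{1/2}` for `ρ^{1/2} ∈ C_c(ℝⁿ)`, weak-*
convergence `μ^k ⇀* μ` in `M(Ω)` implies `‖μ^k − μ‖_D → 0`. -/
theorem weakstar_to_Dnorm
    (n : ℕ) (ρ ρhalf : EuclideanSpace ℝ (Fin n) → ℝ)
    (hρc : Continuous ρ) (hρsupp : HasCompactSupport ρ) (hρne : ρ ≠ 0)
    (hρsym : ∀ x, ρ (-x) = ρ x)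
    (hreal : ∀ ξ, (FourierTransform.fourier (fun x => (ρ x : ℂ)) ξ).im = 0)
    (hpos : ∀ ξ, 0 ≤ (FourierTransform.fourier (fun x => (ρ x : ℂ)) ξ).re)
    (hhc : Continuous ρhalf) (hhsupp : HasCompactSupport ρhalf)
    (hsplit : ∀ x, ρ x = ∫ y, ρhalf y * ρhalf (x - y))
    (Ω : Set (EuclideanSpace ℝ (Fin n))) (hΩ : IsCompact Ω)
    (μseq : ℕ → SignedMeasure (EuclideanSpace ℝ (Fin n)))
    (μ : SignedMeasure (EuclideanSpace ℝ (Fin n)))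
    (hsuppk : ∀ k, (μseq k).totalVariation Ωᶜ = 0)
    (hsuppμ : μ.totalVariation Ωᶜ = 0)
    (hweak : ∀ φ : EuclideanSpace ℝ (Fin n) → ℝ, Continuous φ →
      Tendsto (fun k => sInt (μseq k) φ) atTop (nhds (sInt μ φ))) :
    Tendsto (fun k => Real.sqrt (qForm ρ (μseq k - μ))) atTop (nhds 0) := by
  classical
  -- bound on ρ
  obtain ⟨M, hM⟩ := hρsupp.exists_bound_of_continuous hρc
  -- the BCF-valued translate map
  have hΦcont : ∀ y : (EuclideanSpace ℝ (Fin n)), Continuous (fun x : (EuclideanSpace ℝ (Fin n)) => ρ (x - y)) := fun y =>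
    hρc.comp (continuous_id.sub continuous_const)
  set Φ : (EuclideanSpace ℝ (Fin n)) → ((EuclideanSpace ℝ (Fin n)) →ᵇ ℝ) := fun y =>
    ofNormedAddCommGroup (fun x => ρ (x - y)) (hΦcont y) M (fun x => hM _) with hΦdef
  have hΦapp : ∀ y x, Φ y x = ρ (x - y) := fun y x => rfl
  -- modulus of continuity
  have hmod : ∀ ε : ℝ, 0 < ε → ∃ δ > 0, ∀ y y' : (EuclideanSpace ℝ (Fin n)), dist y y' < δ → ‖Φ y - Φ y'‖ ≤ ε := by
    intro ε hε
    obtain ⟨δ, hδ, h⟩ := Metric.uniformContinuous_iff.mp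
      (hρsupp.uniformContinuous_of_continuous hρc) ε hε
    refine ⟨δ, hδ, fun y y' hyy' => ?_⟩
    rw [norm_le hε.le]
    intro x
    have hd : dist (x - y) (x - y') < δ := by rwa [dist_sub_left]
    have := h hd
    rw [Real.dist_eq] at this
    simpa [Φ, Real.norm_eq_abs] using this.le
  have hΦc : Continuous Φ := by
    rw [Metric.continuous_iff]
    intro y ε hε
    obtain ⟨δ, hδ, h⟩ := hmod (ε / 2) (by positivity)
    exact ⟨δ, hδ, fun a ha => by
      rw [dist_eq_norm]
      exact lt_of_le_of_lt (h a y ha) (by linarith)⟩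
  -- Banach–Steinhaus
  set T : SignedMeasure (EuclideanSpace ℝ (Fin n)) → (((EuclideanSpace ℝ (Fin n)) →ᵇ ℝ) →L[ℝ] ℝ) := fun ν => sIntCLM ν with hTdef
  have hbdd : ∀ f : (EuclideanSpace ℝ (Fin n)) →ᵇ ℝ, ∃ C, ∀ k, ‖T (μseq k) f‖ ≤ C := by
    intro f
    obtain ⟨C, hC⟩ := (hweak f f.continuous).norm.bddAbove_range
    exact ⟨C, fun k => hC (Set.mem_range_self k)⟩
  obtain ⟨C, hC⟩ := banach_steinhaus hbdd
  set B : ℝ := max C ‖T μ‖ + 1 with hBdef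
  have hB0 : 0 < B := by
    have : (0:ℝ) ≤ ‖T μ‖ := norm_nonneg (T μ)
    have h2 : ‖T μ‖ ≤ max C ‖T μ‖ := le_max_right _ _
    simp only [hBdef]; linarith
  have hBk : ∀ k, ‖T (μseq k)‖ ≤ B := fun k =>
    le_trans (hC k) (by have := le_max_left C ‖T μ‖; simp only [hBdef]; linarith)
  have hBμ : ‖T μ‖ ≤ B := by
    have := le_max_right C ‖T μ‖; simp only [hBdef]; linarith
  -- the functions G k, g
  set G : ℕ → (EuclideanSpace ℝ (Fin n)) → ℝ := fun k y => T (μseq k) (Φ y) with hGdef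
  set g : (EuclideanSpace ℝ (Fin n)) → ℝ := fun y => T μ (Φ y) with hgdef
  have hGc : ∀ k, Continuous (G k) := fun k => (T (μseq k)).continuous.comp hΦc
  have hgc : Continuous g := (T μ).continuous.comp hΦc
  have hpt : ∀ y : (EuclideanSpace ℝ (Fin n)), Tendsto (fun k => G k y) atTop (nhds (g y)) := fun y =>
    hweak (fun x => ρ (x - y)) (hΦcont y)
  -- compact set K outside of which everything vanishes
  obtain ⟨R, hR⟩ := hρsupp.isBounded.subset_closedBall (0 : (EuclideanSpace ℝ (Fin n)))
  set K : Set (EuclideanSpace ℝ (Fin n)) := Ω + Metric.closedBall (0 : (EuclideanSpace ℝ (Fin n))) R with hKdef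
  have hKc : IsCompact K := hΩ.add (isCompact_closedBall _ _)
  have hvanish : ∀ P : Measure (EuclideanSpace ℝ (Fin n)), P Ωᶜ = 0 → ∀ y ∉ K, ∫ x, ρ (x - y) ∂P = 0 := by
    intro P hP y hy
    have hsub : {x : (EuclideanSpace ℝ (Fin n)) | ¬ ρ (x - y) = 0} ⊆ Ωᶜ := by
      intro x hx
      simp only [Set.mem_setOf_eq] at hx
      intro hxΩ
      apply hy
      have hmem : x - y ∈ Metric.closedBall (0 : (EuclideanSpace ℝ (Fin n))) R :=
        hR (subset_tsupport _ hx)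
      rw [Metric.mem_closedBall, dist_zero_right] at hmem
      refine ⟨x, hxΩ, y - x, ?_, by module⟩
      rw [Metric.mem_closedBall, dist_zero_right, ← norm_neg]
      simpa using hmem
    exact integral_eq_zero_of_ae (ae_iff.mpr (measure_mono_null hsub hP))
  have hTVparts : ∀ (s : SignedMeasure (EuclideanSpace ℝ (Fin n))), s.totalVariation Ωᶜ = 0 →
      s.toJordanDecomposition.posPart Ωᶜ = 0 ∧ s.toJordanDecomposition.negPart Ωᶜ = 0 := by
    intro s hs
    rw [SignedMeasure.totalVariation, Measure.add_apply, add_eq_zero] at hs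
    exact hs
  have hG0 : ∀ k, ∀ y ∉ K, G k y = 0 := by
    intro k y hy
    obtain ⟨hp, hn⟩ := hTVparts _ (hsuppk k)
    have : G k y = sInt (μseq k) (fun x => ρ (x - y)) := rfl
    rw [this, sInt, hvanish _ hp y hy, hvanish _ hn y hy, sub_zero]
  have hg0 : ∀ y ∉ K, g y = 0 := by
    intro y hy
    obtain ⟨hp, hn⟩ := hTVparts _ hsuppμ
    have : g y = sInt μ (fun x => ρ (x - y)) := rfl
    rw [this, sInt, hvanish _ hp y hy, hvanish _ hn y hy, sub_zero]
  -- uniform smallness, eventually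
  have hunif : ∀ ε : ℝ, 0 < ε → ∀ᶠ k in atTop, ∀ y : (EuclideanSpace ℝ (Fin n)), |G k y - g y| ≤ ε := by
    intro ε hε
    obtain ⟨δ, hδ, hmodδ⟩ := hmod (ε / (3 * B)) (by positivity)
    obtain ⟨t, ht⟩ := hKc.elim_finite_subcover (fun y : (EuclideanSpace ℝ (Fin n)) => Metric.ball y δ)
      (fun y => Metric.isOpen_ball)
      (fun y _ => Set.mem_iUnion.mpr ⟨y, Metric.mem_ball_self hδ⟩)
    have hev : ∀ᶠ k in atTop, ∀ i ∈ t, |G k i - g i| < ε / 3 := by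
      rw [eventually_all_finset]
      intro i _
      have h3 := Metric.tendsto_atTop.mp (hpt i) (ε / 3) (by positivity)
      obtain ⟨N, hN⟩ := h3
      exact eventually_atTop.mpr ⟨N, fun k hk => by
        have := hN k hk; rwa [Real.dist_eq] at this⟩
    filter_upwards [hev] with k hk y
    by_cases hyK : y ∈ K
    · obtain ⟨i, hit, hyi⟩ := Set.mem_iUnion₂.mp (ht hyK)
      rw [Metric.mem_ball] at hyi
      have hΦsmall : ‖Φ y - Φ i‖ ≤ ε / (3 * B) := hmodδ y i hyi
      have e1 : |G k y - G k i| ≤ ε / 3 := by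
        have heq : G k y - G k i = T (μseq k) (Φ y - Φ i) := by
          simp [hGdef, map_sub]
        rw [heq, ← Real.norm_eq_abs]
        calc ‖T (μseq k) (Φ y - Φ i)‖ ≤ ‖T (μseq k)‖ * ‖Φ y - Φ i‖ :=
              (T (μseq k)).le_opNorm _
          _ ≤ B * (ε / (3 * B)) :=
              mul_le_mul (hBk k) hΦsmall (norm_nonneg _) hB0.le
          _ = ε / 3 := by field_simp
      have e3 : |g i - g y| ≤ ε / 3 := by
        have heq : g i - g y = T μ (Φ i - Φ y) := by
          simp [hgdef, map_sub]
        rw [heq, ← Real.norm_eq_abs]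
        have hΦsmall' : ‖Φ i - Φ y‖ ≤ ε / (3 * B) := by
          rw [← norm_neg]; simpa using hΦsmall
        calc ‖T μ (Φ i - Φ y)‖ ≤ ‖T μ‖ * ‖Φ i - Φ y‖ := (T μ).le_opNorm _
          _ ≤ B * (ε / (3 * B)) := mul_le_mul hBμ hΦsmall' (norm_nonneg _) hB0.le
          _ = ε / 3 := by field_simp
      have e2 : |G k i - g i| ≤ ε / 3 := (hk i hit).le
      calc |G k y - g y| ≤ |G k y - G k i| + |G k i - g y| := abs_sub_le _ _ _
        _ ≤ |G k y - G k i| + (|G k i - g i| + |g i - g y|) := by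
            have := abs_sub_le (G k i) (g i) (g y); linarith
        _ ≤ ε / 3 + (ε / 3 + ε / 3) := by linarith
        _ = ε := by ring
    · rw [hG0 k y hyK, hg0 y hyK, sub_zero, abs_zero]; exact hε.le
  -- integrability helper
  have hintΦ : ∀ y : (EuclideanSpace ℝ (Fin n)), ∀ P : Measure (EuclideanSpace ℝ (Fin n)), IsFiniteMeasure P →
      Integrable (fun x => ρ (x - y)) P := by
    intro y P hP
    exact (Φ y).integrable P
  -- conclusion for qForm
  have hq : Tendsto (fun k => qForm ρ (μseq k - μ)) atTop (nhds 0) := by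
    refine NormedAddCommGroup.tendsto_nhds_zero.mpr fun ε hε => ?_
    filter_upwards [hunif (ε / (4 * B)) (by positivity)] with k hk
    set ψ : (EuclideanSpace ℝ (Fin n)) →ᵇ ℝ := ofNormedAddCommGroup (fun y => G k y - g y)
      ((hGc k).sub hgc) (ε / (4 * B)) (fun y => by
        simpa [Real.norm_eq_abs] using hk y) with hψdef
    have hψle : ‖ψ‖ ≤ ε / (4 * B) :=
      norm_ofNormedAddCommGroup_le _ (by positivity) _
    have hinner : (fun y => sInt (μseq k - μ) (fun x => ρ (x - y))) = ⇑ψ := by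
      funext y
      rw [sInt_sub' (μseq k) μ _ (hintΦ y)]
      rfl
    have hqe : qForm ρ (μseq k - μ) = T (μseq k) ψ - T μ ψ := by
      rw [qForm, hinner, sInt_sub' (μseq k) μ _ (fun P hP => ψ.integrable P)]
      rfl
    rw [hqe]
    calc ‖T (μseq k) ψ - T μ ψ‖ ≤ ‖T (μseq k) ψ‖ + ‖T μ ψ‖ := norm_sub_le _ _
      _ ≤ ‖T (μseq k)‖ * ‖ψ‖ + ‖T μ‖ * ‖ψ‖ :=
          add_le_add ((T (μseq k)).le_opNorm _) ((T μ).le_opNorm _)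
      _ ≤ B * (ε / (4 * B)) + B * (ε / (4 * B)) :=
          add_le_add (mul_le_mul (hBk k) hψle (norm_nonneg _) hB0.le)
            (mul_le_mul hBμ hψle (norm_nonneg _) hB0.le)
      _ = ε / 2 := by field_simp; ring
      _ < ε := by linarith
  have := (Real.continuous_sqrt.tendsto 0).comp hq
  simpa [Function.comp_def] using this
end

section
/- Let G be a finite index set, and for each z ∈ G let θ_z ∈ L²(ℝ^n) ∩ L¹(ℝ^n) be non-negative, with L₀ ≥ sup_{x ∈ ℝ^n} Σ_{z∈G} θ_z(x) ∫ θ_z(w) dw. Let ψ ∈ C_c(ℝ^n) be symmetric, and define A : M(ℝ^n) → ℝ^{#G} by [Aμ]_z = ∫ (θ_z * ψ)(x) dμ(x). Then for every Radon measure μ, ‖Aμ‖₂² ≤ L₀ ∫∫ (ψ*ψ)(x−y) dμ(x) dμ(y). -/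
open MeasureTheory

namespace SensorAux

variable {n : ℕ}
local notation "E" => EuclideanSpace ℝ (Fin n)

lemma smF (ψ : E → ℝ) (hψc : Continuous ψ) (a : Measure E) [SFinite a] :
    StronglyMeasurable (fun w : E => ∫ x, ψ (x - w) ∂a) := by
  have h : StronglyMeasurable (Function.uncurry (fun w x : E => ψ (x - w))) :=
    (hψc.comp (continuous_snd.sub continuous_fst)).stronglyMeasurable
  exact h.integral_prod_right

lemma intJ (ψ : E → ℝ) (hψc : Continuous ψ) (hψi : Integrable ψ (volume : Measure E))
    (a : Measure E) [IsFiniteMeasure a] :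
    Integrable (fun z : E × E => ψ (z.1 - z.2)) (a.prod volume) := by
  have hm : AEStronglyMeasurable (fun z : E × E => ψ (z.1 - z.2)) (a.prod volume) :=
    (hψc.comp (continuous_fst.sub continuous_snd)).aestronglyMeasurable
  rw [integrable_prod_iff hm]
  refine ⟨ae_of_all _ fun x => hψi.comp_sub_left x, ?_⟩
  have he : (fun x : E => ∫ w, ‖ψ (x - w)‖) = fun _ => ∫ w, ‖ψ w‖ := by
    funext x; exact integral_sub_left_eq_self (fun w => ‖ψ w‖) volume x
  rw [he]; exact integrable_const _

lemma intProd_bdd (ψ : E → ℝ) (hψc : Continuous ψ) (hψi : Integrable ψ (volume : Measure E))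
    (a : Measure E) [IsFiniteMeasure a] {k : E → ℝ}
    (hk : AEStronglyMeasurable k (volume : Measure E)) {C : ℝ} (hkC : ∀ w, ‖k w‖ ≤ C) :
    Integrable (fun z : E × E => k z.2 * ψ (z.1 - z.2)) (a.prod volume) := by
  have hm : AEStronglyMeasurable (fun z : E × E => k z.2 * ψ (z.1 - z.2)) (a.prod volume) :=
    (hk.comp_quasiMeasurePreserving Measure.quasiMeasurePreserving_snd).mul
      (hψc.comp (continuous_fst.sub continuous_snd)).aestronglyMeasurable
  refine ((intJ ψ hψc hψi a).norm.const_mul C).mono' hm (ae_of_all _ fun z => ?_)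
  calc ‖k z.2 * ψ (z.1 - z.2)‖ = ‖k z.2‖ * ‖ψ (z.1 - z.2)‖ := norm_mul _ _
    _ ≤ C * ‖ψ (z.1 - z.2)‖ := mul_le_mul_of_nonneg_right (hkC _) (norm_nonneg _)

lemma intProd_int (ψ : E → ℝ) (hψc : Continuous ψ) {C : ℝ} (hC : ∀ x, ‖ψ x‖ ≤ C)
    (a : Measure E) [IsFiniteMeasure a] {h : E → ℝ} (hh : Integrable h (volume : Measure E)) :
    Integrable (fun z : E × E => h z.2 * ψ (z.1 - z.2)) (a.prod volume) := by
  have hm : AEStronglyMeasurable (fun z : E × E => h z.2 * ψ (z.1 - z.2)) (a.prod volume) :=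
    (hh.aestronglyMeasurable.comp_quasiMeasurePreserving Measure.quasiMeasurePreserving_snd).mul
      (hψc.comp (continuous_fst.sub continuous_snd)).aestronglyMeasurable
  have hdom : Integrable (fun z : E × E => C * ‖h z.2‖) (a.prod volume) :=
    (integrable_const C).mul_prod hh.norm
  refine hdom.mono' hm (ae_of_all _ fun z => ?_)
  calc ‖h z.2 * ψ (z.1 - z.2)‖ = ‖h z.2‖ * ‖ψ (z.1 - z.2)‖ := norm_mul _ _
    _ ≤ ‖h z.2‖ * C := mul_le_mul_of_nonneg_left (hC _) (norm_nonneg _)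
    _ = C * ‖h z.2‖ := mul_comm _ _

lemma swapInt (ψ : E → ℝ) (a : Measure E) [IsFiniteMeasure a] {k : E → ℝ}
    (hint : Integrable (fun z : E × E => k z.2 * ψ (z.1 - z.2)) (a.prod volume)) :
    ∫ x, (∫ w, k w * ψ (x - w)) ∂a = ∫ w, k w * (∫ x, ψ (x - w) ∂a) := by
  rw [integral_integral_swap (f := fun x w => k w * ψ (x - w)) hint]
  simp_rw [integral_const_mul]

lemma cs_weighted {α : Type*} [MeasurableSpace α] {m : Measure α} {θ F : α → ℝ}
    (hθ0 : ∀ x, 0 ≤ θ x) (hθi : Integrable θ m)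
    (h1 : Integrable (fun w => θ w * F w) m) (h2 : Integrable (fun w => θ w * F w ^ 2) m) :
    (∫ w, θ w * F w ∂m) ^ 2 ≤ (∫ w, θ w ∂m) * ∫ w, θ w * F w ^ 2 ∂m := by
  have key : ∀ t : ℝ, 0 ≤ (∫ w, θ w ∂m) * (t * t) + (2 * ∫ w, θ w * F w ∂m) * t
      + ∫ w, θ w * F w ^ 2 ∂m := by
    intro t
    have h0 : 0 ≤ ∫ w, θ w * (F w + t) ^ 2 ∂m :=
      integral_nonneg fun w => mul_nonneg (hθ0 w) (sq_nonneg _)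
    have he : (fun w => θ w * (F w + t) ^ 2)
        = fun w => ((t * t) * θ w + (2 * t) * (θ w * F w)) + θ w * F w ^ 2 := by
      funext w; ring
    have hb : Integrable (fun w => (t * t) * θ w) m := hθi.const_mul _
    have hc : Integrable (fun w => (2 * t) * (θ w * F w)) m := h1.const_mul _
    have ha : Integrable (fun w => (t * t) * θ w + (2 * t) * (θ w * F w)) m := hb.add hc
    rw [he, integral_add ha h2, integral_add hb hc,
      integral_const_mul, integral_const_mul] at h0
    nlinarith [h0]
  have hd := discrim_le_zero key
  rw [discrim] at hd
  nlinarith [hd]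

lemma intFF (ψ : E → ℝ) (hψc : Continuous ψ) (hψi : Integrable ψ (volume : Measure E))
    {C : ℝ} (hC : ∀ x, ‖ψ x‖ ≤ C)
    (a b : Measure E) [IsFiniteMeasure a] [IsFiniteMeasure b] :
    Integrable (fun w => (∫ x, ψ (x - w) ∂a) * (∫ y, ψ (y - w) ∂b)) volume := by
  have hGa : Integrable (fun w => ∫ x, ‖ψ (x - w)‖ ∂a) volume :=
    (intJ ψ hψc hψi a).integral_norm_prod_right
  refine (hGa.const_mul (C * (b Set.univ).toReal)).mono'
    ((smF ψ hψc a).mul (smF ψ hψc b)).aestronglyMeasurable (ae_of_all _ fun w => ?_)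
  rw [norm_mul]
  have h1 : ‖∫ x, ψ (x - w) ∂a‖ ≤ ∫ x, ‖ψ (x - w)‖ ∂a := norm_integral_le_integral_norm _
  have h2 : ‖∫ y, ψ (y - w) ∂b‖ ≤ C * (b Set.univ).toReal :=
    norm_integral_le_of_norm_le_const (ae_of_all _ fun x => hC _)
  nlinarith [norm_nonneg (∫ x, ψ (x - w) ∂a), norm_nonneg (∫ y, ψ (y - w) ∂b)]

lemma pairD (ψ : E → ℝ) (hψc : Continuous ψ) (hψsupp : HasCompactSupport ψ)
    (hψsym : ∀ x, ψ (-x) = ψ x) {C : ℝ} (hC : ∀ x, ‖ψ x‖ ≤ C)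
    (a b : Measure E) [IsFiniteMeasure a] [IsFiniteMeasure b] :
    ∫ y, (∫ x, (∫ u, ψ u * ψ ((x - y) - u)) ∂a) ∂b
      = ∫ w, (∫ x, ψ (x - w) ∂a) * (∫ y, ψ (y - w) ∂b) := by
  have hψi : Integrable ψ (volume : Measure E) := hψc.integrable_of_hasCompactSupport hψsupp
  have hpt : ∀ x y : E, (∫ u, ψ u * ψ ((x - y) - u)) = ∫ w, ψ (y - w) * ψ (x - w) := by
    intro x y
    have e1 := integral_sub_left_eq_self (fun w => ψ w * ψ ((x - y) + w)) volume y
    simp only [sub_add_sub_cancel] at e1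
    have e2 := integral_neg_eq_self (fun w => ψ w * ψ ((x - y) + w)) volume
    simp only [hψsym, ← sub_eq_add_neg] at e2
    exact e2.trans e1.symm
  have hFa_b : ∀ w : E, ‖∫ x, ψ (x - w) ∂a‖ ≤ C * (a Set.univ).toReal := fun w =>
    norm_integral_le_of_norm_le_const (ae_of_all _ fun x => hC _)
  calc ∫ y, (∫ x, (∫ u, ψ u * ψ ((x - y) - u)) ∂a) ∂b
      = ∫ y, (∫ x, (∫ w, ψ (y - w) * ψ (x - w)) ∂a) ∂b :=
        integral_congr_ae (ae_of_all _ fun y =>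
          integral_congr_ae (ae_of_all _ fun x => hpt x y))
    _ = ∫ y, (∫ w, ψ (y - w) * (∫ x, ψ (x - w) ∂a)) ∂b := by
        refine integral_congr_ae (ae_of_all _ fun y => ?_)
        exact swapInt ψ a (intProd_bdd ψ hψc hψi a
          ((hψc.comp (continuous_const.sub continuous_id)).aestronglyMeasurable)
          (fun w => hC _))
    _ = ∫ y, (∫ w, (∫ x, ψ (x - w) ∂a) * ψ (y - w)) ∂b :=
        integral_congr_ae (ae_of_all _ fun y =>
          integral_congr_ae (ae_of_all _ fun w => mul_comm _ _))
    _ = ∫ w, (∫ x, ψ (x - w) ∂a) * (∫ y, ψ (y - w) ∂b) :=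
        swapInt ψ b (intProd_bdd ψ hψc hψi b (smF ψ hψc a).aestronglyMeasurable hFa_b)

lemma intInner (ψ : E → ℝ) (hψc : Continuous ψ) (hψsupp : HasCompactSupport ψ)
    (a b : Measure E) [IsFiniteMeasure a] [IsFiniteMeasure b] :
    Integrable (fun y => ∫ x, (∫ u, ψ u * ψ ((x - y) - u)) ∂a) b := by
  obtain ⟨C, hC⟩ := hψsupp.exists_bound_of_continuous hψc
  have hψi : Integrable ψ (volume : Measure E) := hψc.integrable_of_hasCompactSupport hψsupp
  set K : E → ℝ := fun v => ∫ u, ψ u * ψ (v - u) with hK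
  have hKsm : StronglyMeasurable K := by
    have h : StronglyMeasurable (Function.uncurry fun v u : E => ψ u * ψ (v - u)) :=
      ((hψc.comp continuous_snd).mul
        (hψc.comp (continuous_fst.sub continuous_snd))).stronglyMeasurable
    exact h.integral_prod_right
  have hKb : ∀ v, ‖K v‖ ≤ C * ∫ u, ‖ψ u‖ := by
    intro v
    have hi : Integrable (fun u => ψ u * ψ (v - u)) volume :=
      (hψi.comp_sub_left v).bdd_mul hψc.aestronglyMeasurable (ae_of_all _ fun u => hC u)
    calc ‖K v‖ ≤ ∫ u, ‖ψ u * ψ (v - u)‖ := norm_integral_le_integral_norm _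
      _ ≤ ∫ u, C * ‖ψ u‖ := by
          refine integral_mono hi.norm (hψi.norm.const_mul _) fun u => ?_
          rw [norm_mul]
          nlinarith [hC (v - u), norm_nonneg (ψ u), norm_nonneg (ψ (v - u)), hC u]
      _ = C * ∫ u, ‖ψ u‖ := integral_const_mul _ _
  have hm : StronglyMeasurable (fun y => ∫ x, K (x - y) ∂a) := by
    have h : StronglyMeasurable (Function.uncurry fun y x : E => K (x - y)) :=
      hKsm.comp_measurable (measurable_snd.sub measurable_fst)
    exact h.integral_prod_right
  refine (integrable_const ((C * ∫ u, ‖ψ u‖) * (a Set.univ).toReal)).mono'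
    hm.aestronglyMeasurable (ae_of_all _ fun y => ?_)
  exact norm_integral_le_of_norm_le_const (ae_of_all _ fun x => hKb _)

end SensorAux

/-- for a finite sensor grid with `L₀ ≥ sup_x Σ_z θ_z(x) ∫θ_z`, a
symmetric spread `ψ ∈ C_c(ℝⁿ)` and `[Aμ]_z = ∫ (θ_z * ψ) dμ`, we have
`‖Aμ‖₂² ≤ L₀ ∫∫ (ψ*ψ)(x−y) dμ(x) dμ(y)`. -/
theorem sensor_grid_bound
    (n : ℕ) (G : Type*) [Fintype G]
    (θ : G → EuclideanSpace ℝ (Fin n) → ℝ)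
    (hθpos : ∀ z x, 0 ≤ θ z x)
    (hθL1 : ∀ z, Integrable (θ z))
    (hθL2 : ∀ z, MemLp (θ z) 2 (volume : Measure (EuclideanSpace ℝ (Fin n))))
    (L₀ : ℝ)
    (hL₀ : ∀ x, ∑ z : G, θ z x * (∫ w, θ z w) ≤ L₀)
    (ψ : EuclideanSpace ℝ (Fin n) → ℝ)
    (hψc : Continuous ψ) (hψsupp : HasCompactSupport ψ)
    (hψsym : ∀ x, ψ (-x) = ψ x)
    (μ : SignedMeasure (EuclideanSpace ℝ (Fin n))) :
    ∑ z : G, (sInt μ (fun x => ∫ w, θ z w * ψ (x - w))) ^ 2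
      ≤ L₀ * sInt μ (fun y => sInt μ (fun x => ∫ w, ψ w * ψ ((x - y) - w))) := by
  classical
  set ν := μ.toJordanDecomposition.posPart with hν
  set ρ := μ.toJordanDecomposition.negPart with hρ
  haveI hνfin : IsFiniteMeasure ν := μ.toJordanDecomposition.posPart_finite
  haveI hρfin : IsFiniteMeasure ρ := μ.toJordanDecomposition.negPart_finite
  have hψi : Integrable ψ (volume : Measure (EuclideanSpace ℝ (Fin n))) :=
    hψc.integrable_of_hasCompactSupport hψsupp
  obtain ⟨Cψ, hCψ⟩ := hψsupp.exists_bound_of_continuous hψc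
  have hsInt : ∀ f : EuclideanSpace ℝ (Fin n) → ℝ,
      sInt μ f = (∫ x, f x ∂ν) - ∫ x, f x ∂ρ := fun f => rfl
  -- the "field" F and its basic properties
  set F : EuclideanSpace ℝ (Fin n) → ℝ :=
    fun w => (∫ x, ψ (x - w) ∂ν) - ∫ x, ψ (x - w) ∂ρ with hFdef
  have hFsm : StronglyMeasurable F :=
    (SensorAux.smF ψ hψc ν).sub (SensorAux.smF ψ hψc ρ)
  set CF : ℝ := Cψ * (ν Set.univ).toReal + Cψ * (ρ Set.univ).toReal with hCF
  have hFb : ∀ w, ‖F w‖ ≤ CF := by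
    intro w
    have h1 : ‖∫ x, ψ (x - w) ∂ν‖ ≤ Cψ * (ν Set.univ).toReal :=
      norm_integral_le_of_norm_le_const (ae_of_all _ fun x => hCψ _)
    have h2 : ‖∫ x, ψ (x - w) ∂ρ‖ ≤ Cψ * (ρ Set.univ).toReal :=
      norm_integral_le_of_norm_le_const (ae_of_all _ fun x => hCψ _)
    calc ‖F w‖ ≤ ‖∫ x, ψ (x - w) ∂ν‖ + ‖∫ x, ψ (x - w) ∂ρ‖ := norm_sub_le _ _
      _ ≤ CF := by rw [hCF]; exact add_le_add h1 h2
  -- integrability of the products θ z * F, θ z * F ^ 2 and F ^ 2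
  have hIθF : ∀ z, Integrable (fun w => θ z w * F w) volume := by
    intro z
    have h := (hθL1 z).bdd_mul (c := CF) hFsm.aestronglyMeasurable (ae_of_all _ hFb)
    exact (integrable_congr (ae_of_all _ fun w => mul_comm (F w) (θ z w))).mp h
  have hF2sm : AEStronglyMeasurable (fun w => F w ^ 2)
      (volume : Measure (EuclideanSpace ℝ (Fin n))) := by
    have : (fun w => F w ^ 2) = fun w => F w * F w := by funext w; ring
    rw [this]; exact (hFsm.mul hFsm).aestronglyMeasurable
  have hIθF2 : ∀ z, Integrable (fun w => θ z w * F w ^ 2) volume := by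
    intro z
    have hb2 : ∀ w, ‖F w ^ 2‖ ≤ CF ^ 2 := by
      intro w
      rw [norm_pow]
      nlinarith [hFb w, norm_nonneg (F w)]
    have h := (hθL1 z).bdd_mul (c := CF ^ 2) hF2sm (ae_of_all _ hb2)
    exact (integrable_congr (ae_of_all _ fun w => mul_comm (F w ^ 2) (θ z w))).mp h
  have hIF2 : Integrable (fun w => F w ^ 2) volume := by
    have he : (fun w => F w ^ 2)
        = fun w => (((∫ x, ψ (x - w) ∂ν) * (∫ y, ψ (y - w) ∂ν))
              - ((∫ x, ψ (x - w) ∂ν) * (∫ y, ψ (y - w) ∂ρ)))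
            - (((∫ x, ψ (x - w) ∂ρ) * (∫ y, ψ (y - w) ∂ν))
              - ((∫ x, ψ (x - w) ∂ρ) * (∫ y, ψ (y - w) ∂ρ))) := by
      funext w; rw [hFdef]; ring
    rw [he]
    exact ((SensorAux.intFF ψ hψc hψi hCψ ν ν).sub (SensorAux.intFF ψ hψc hψi hCψ ν ρ)).sub
      ((SensorAux.intFF ψ hψc hψi hCψ ρ ν).sub (SensorAux.intFF ψ hψc hψi hCψ ρ ρ))
  -- Step A : the components of Aμ
  have hA : ∀ z, sInt μ (fun x => ∫ w, θ z w * ψ (x - w)) = ∫ w, θ z w * F w := by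
    intro z
    have hi1 : Integrable (fun w => θ z w * ∫ x, ψ (x - w) ∂ν) volume := by
      have h := (hθL1 z).bdd_mul (c := Cψ * (ν Set.univ).toReal)
        (SensorAux.smF ψ hψc ν).aestronglyMeasurable
        (ae_of_all _ fun w => norm_integral_le_of_norm_le_const (ae_of_all _ fun x => hCψ _))
      exact (integrable_congr (ae_of_all _ fun w => mul_comm _ (θ z w))).mp h
    have hi2 : Integrable (fun w => θ z w * ∫ x, ψ (x - w) ∂ρ) volume := by
      have h := (hθL1 z).bdd_mul (c := Cψ * (ρ Set.univ).toReal)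
        (SensorAux.smF ψ hψc ρ).aestronglyMeasurable
        (ae_of_all _ fun w => norm_integral_le_of_norm_le_const (ae_of_all _ fun x => hCψ _))
      exact (integrable_congr (ae_of_all _ fun w => mul_comm _ (θ z w))).mp h
    simp only [hsInt]
    rw [SensorAux.swapInt ψ ν (SensorAux.intProd_int ψ hψc hCψ ν (hθL1 z)),
      SensorAux.swapInt ψ ρ (SensorAux.intProd_int ψ hψc hCψ ρ (hθL1 z)),
      ← integral_sub hi1 hi2]
    exact integral_congr_ae (ae_of_all _ fun w => (mul_sub (θ z w) _ _).symm)
  -- Step D : the quadratic form identity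
  have hD : sInt μ (fun y => sInt μ (fun x => ∫ w, ψ w * ψ ((x - y) - w)))
      = ∫ w, F w ^ 2 := by
    have hi12 : Integrable (fun w => ((∫ x, ψ (x - w) ∂ν) * ∫ y, ψ (y - w) ∂ν)
        - ((∫ x, ψ (x - w) ∂ρ) * ∫ y, ψ (y - w) ∂ν)) volume :=
      (SensorAux.intFF ψ hψc hψi hCψ ν ν).sub (SensorAux.intFF ψ hψc hψi hCψ ρ ν)
    have hi34 : Integrable (fun w => ((∫ x, ψ (x - w) ∂ν) * ∫ y, ψ (y - w) ∂ρ)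
        - ((∫ x, ψ (x - w) ∂ρ) * ∫ y, ψ (y - w) ∂ρ)) volume :=
      (SensorAux.intFF ψ hψc hψi hCψ ν ρ).sub (SensorAux.intFF ψ hψc hψi hCψ ρ ρ)
    simp only [hsInt]
    rw [integral_sub (SensorAux.intInner ψ hψc hψsupp ν ν)
        (SensorAux.intInner ψ hψc hψsupp ρ ν),
      integral_sub (SensorAux.intInner ψ hψc hψsupp ν ρ)
        (SensorAux.intInner ψ hψc hψsupp ρ ρ),
      SensorAux.pairD ψ hψc hψsupp hψsym hCψ ν ν,
      SensorAux.pairD ψ hψc hψsupp hψsym hCψ ρ ν,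
      SensorAux.pairD ψ hψc hψsupp hψsym hCψ ν ρ,
      SensorAux.pairD ψ hψc hψsupp hψsym hCψ ρ ρ,
      ← integral_sub (SensorAux.intFF ψ hψc hψi hCψ ν ν) (SensorAux.intFF ψ hψc hψi hCψ ρ ν),
      ← integral_sub (SensorAux.intFF ψ hψc hψi hCψ ν ρ) (SensorAux.intFF ψ hψc hψi hCψ ρ ρ),
      ← integral_sub hi12 hi34]
    refine integral_congr_ae (ae_of_all _ fun w => ?_)
    rw [hFdef]; ring
  -- put everything together
  calc ∑ z : G, (sInt μ (fun x => ∫ w, θ z w * ψ (x - w))) ^ 2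
      = ∑ z : G, (∫ w, θ z w * F w) ^ 2 :=
        Finset.sum_congr rfl fun z _ => by rw [hA z]
    _ ≤ ∑ z : G, (∫ w, θ z w) * ∫ w, θ z w * F w ^ 2 :=
        Finset.sum_le_sum fun z _ =>
          SensorAux.cs_weighted (hθpos z) (hθL1 z) (hIθF z) (hIθF2 z)
    _ = ∫ w, ∑ z : G, (∫ w', θ z w') * (θ z w * F w ^ 2) := by
        rw [integral_finset_sum _ fun z _ => (hIθF2 z).const_mul _]
        exact Finset.sum_congr rfl fun z _ => (integral_const_mul _ _).symm
    _ ≤ ∫ w, L₀ * F w ^ 2 := by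
        refine integral_mono (integrable_finset_sum _ fun z _ => (hIθF2 z).const_mul _)
          (hIF2.const_mul L₀) fun w => ?_
        have h1 : ∑ z : G, (∫ w', θ z w') * (θ z w * F w ^ 2)
            = (∑ z : G, θ z w * ∫ w', θ z w') * F w ^ 2 := by
          rw [Finset.sum_mul]
          exact Finset.sum_congr rfl fun z _ => by ring
        rw [h1]
        exact mul_le_mul_of_nonneg_right (hL₀ w) (sq_nonneg _)
    _ = L₀ * ∫ w, F w ^ 2 := integral_const_mul _ _
    _ = L₀ * sInt μ (fun y => sInt μ (fun x => ∫ w, ψ w * ψ ((x - y) - w))) := by rw [hD]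
end

section
/- (Deterministic Robbins–Siegmund) Let {a_k}, {b_k}, {c_k}, {d_k} be non-negative real sequences satisfying a_{k+1} ≤ a_k(1 + b_k) + c_k − d_k for all k ∈ ℕ. If Σ b_k < ∞ and Σ c_k < ∞, then lim_{k→∞} a_k exists and is finite, and Σ_{k=0}^∞ d_k < ∞. -/
open Filter

/-- Auxiliary lemma: Robbins–Siegmund with `b = 0`. -/
lemma robbins_siegmund_aux
    (A e f : ℕ → ℝ)
    (hA : ∀ k, 0 ≤ A k) (he : ∀ k, 0 ≤ e k) (hf : ∀ k, 0 ≤ f k)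
    (hrec : ∀ k, A (k + 1) ≤ A k + e k - f k) (hes : Summable e) :
    (∃ L : ℝ, Tendsto A atTop (nhds L)) ∧ Summable f := by
  set E : ℕ → ℝ := fun k => ∑ j ∈ Finset.range k, e j with hE
  set F : ℕ → ℝ := fun k => ∑ j ∈ Finset.range k, f j with hF
  set S : ℕ → ℝ := fun k => A k - E k + F k with hS
  have hEle : ∀ k, E k ≤ tsum e := fun k =>
    Summable.sum_le_tsum _ (fun i _ => he i) hes
  have hFnn : ∀ k, 0 ≤ F k := fun k => Finset.sum_nonneg fun i _ => hf i
  have hSanti : Antitone S := by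
    apply antitone_nat_of_succ_le
    intro k
    have h := hrec k
    simp only [hS, hE, hF, Finset.sum_range_succ]
    linarith
  have hSlb : ∀ k, -(tsum e) ≤ S k := by
    intro k
    have := hA k; have := hFnn k; have := hEle k
    simp only [hS]; linarith
  have hSconv : Tendsto S atTop (nhds (⨅ k, S k)) := by
    apply tendsto_atTop_ciInf hSanti
    exact ⟨-(tsum e), by rintro x ⟨k, rfl⟩; exact hSlb k⟩
  have hFle : ∀ k, F k ≤ S 0 + tsum e := by
    intro k
    have h1 : S k ≤ S 0 := hSanti (Nat.zero_le k)
    have := hA k; have := hEle k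
    simp only [hS] at h1 ⊢
    linarith
  have hfs : Summable f := by
    apply summable_of_sum_range_le hf
    intro k; exact hFle k
  refine ⟨⟨(⨅ k, S k) + tsum e - tsum f, ?_⟩, hfs⟩
  have hEconv : Tendsto E atTop (nhds (tsum e)) := hes.hasSum.tendsto_sum_nat
  have hFconv : Tendsto F atTop (nhds (tsum f)) := hfs.hasSum.tendsto_sum_nat
  have : Tendsto (fun k => S k + E k - F k) atTop (nhds ((⨅ k, S k) + tsum e - tsum f)) :=
    (hSconv.add hEconv).sub hFconv
  refine this.congr fun k => by simp only [hS]; ring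

/-- deterministic Robbins–Siegmund: if non-negative sequences satisfy
`a_{k+1} ≤ a_k(1+b_k) + c_k − d_k` with `Σb_k < ∞` and `Σc_k < ∞`, then `a_k`
converges to a finite limit and `Σ d_k < ∞`. -/
theorem robbins_siegmund
    (a b c d : ℕ → ℝ)
    (ha : ∀ k, 0 ≤ a k) (hb : ∀ k, 0 ≤ b k) (hc : ∀ k, 0 ≤ c k) (hd : ∀ k, 0 ≤ d k)
    (hrec : ∀ k, a (k + 1) ≤ a k * (1 + b k) + c k - d k)
    (hbsum : Summable b) (hcsum : Summable c) :
    (∃ L : ℝ, Tendsto a atTop (nhds L)) ∧ Summable d := by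
  set P : ℕ → ℝ := fun k => ∏ j ∈ Finset.range k, (1 + b j) with hP
  have hP1 : ∀ k, 1 ≤ P k := by
    intro k
    show 1 ≤ ∏ j ∈ Finset.range k, (1 + b j)
    calc (1:ℝ) = ∏ _j ∈ Finset.range k, 1 := by simp
      _ ≤ ∏ j ∈ Finset.range k, (1 + b j) :=
        Finset.prod_le_prod (fun i _ => zero_le_one) (fun i _ => by linarith [hb i])
  have hPpos : ∀ k, 0 < P k := fun k => lt_of_lt_of_le one_pos (hP1 k)
  have hPsucc : ∀ k, P (k + 1) = P k * (1 + b k) := fun k =>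
    Finset.prod_range_succ _ _
  have hPmono : Monotone P := by
    apply monotone_nat_of_le_succ
    intro k
    rw [hPsucc k]
    nlinarith [hPpos k, hb k]
  set M : ℝ := Real.exp (tsum b) with hM
  have hPM : ∀ k, P k ≤ M := by
    intro k
    calc P k ≤ ∏ j ∈ Finset.range k, Real.exp (b j) := by
          apply Finset.prod_le_prod
          · intro j _; linarith [hb j]
          · intro j _
            have := Real.add_one_le_exp (b j); linarith
      _ = Real.exp (∑ j ∈ Finset.range k, b j) := by
          rw [Real.exp_sum]
      _ ≤ M := by
          apply Real.exp_le_exp.2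
          exact Summable.sum_le_tsum _ (fun i _ => hb i) hbsum
  have hPconv : Tendsto P atTop (nhds (⨆ k, P k)) := by
    apply tendsto_atTop_ciSup hPmono
    exact ⟨M, by rintro x ⟨k, rfl⟩; exact hPM k⟩
  set A : ℕ → ℝ := fun k => a k / P k with hA
  set e : ℕ → ℝ := fun k => c k / P (k + 1) with he
  set f : ℕ → ℝ := fun k => d k / P (k + 1) with hf
  have hAnn : ∀ k, 0 ≤ A k := fun k => div_nonneg (ha k) (hPpos k).le
  have henn : ∀ k, 0 ≤ e k := fun k => div_nonneg (hc k) (hPpos _).le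
  have hfnn : ∀ k, 0 ≤ f k := fun k => div_nonneg (hd k) (hPpos _).le
  have hrec' : ∀ k, A (k + 1) ≤ A k + e k - f k := by
    intro k
    have hp := hPpos (k + 1)
    have hpk := hPpos k
    have hbk : (0 : ℝ) < 1 + b k := by linarith [hb k]
    have key : a (k + 1) / P (k + 1) ≤ (a k * (1 + b k) + c k - d k) / P (k + 1) := by
      gcongr
      exact hrec k
    have heq : (a k * (1 + b k) + c k - d k) / P (k + 1) = A k + e k - f k := by
      simp only [hA, he, hf, hPsucc k]
      field_simp
    show a (k + 1) / P (k + 1) ≤ A k + e k - f k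
    rw [← heq]
    exact key
  have hes : Summable e := by
    apply Summable.of_nonneg_of_le henn _ hcsum
    intro k
    exact div_le_self (hc k) (hP1 _)
  obtain ⟨⟨L, hL⟩, hfs⟩ := robbins_siegmund_aux A e f hAnn henn hfnn hrec' hes
  constructor
  · refine ⟨L * (⨆ k, P k), ?_⟩
    have : Tendsto (fun k => A k * P k) atTop (nhds (L * (⨆ k, P k))) := hL.mul hPconv
    refine this.congr fun k => ?_
    simp only [hA]
    exact div_mul_cancel₀ _ (hPpos k).ne'
  · apply Summable.of_nonneg_of_le hd _ (hfs.mul_right M)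
    intro k
    have : d k = f k * P (k + 1) := by
      simp only [hf]
      rw [div_mul_cancel₀ _ (hPpos _).ne']
    rw [this]
    exact mul_le_mul_of_nonneg_left (hPM _) (hfnn k)
end

section
/- Let λ₀ = 1 and λ_{k+1} = 2λ_k/(λ_k + √(4 + λ_k²)) for k ∈ ℕ. Then for all N ∈ ℕ: (i) λ_N ∈ (0,1]; (ii) 1/λ_{k+1} = (1 + √(1 + 4/λ_k²))/2 ≤ 1 + 1/λ_k, hence 1/λ_N ≤ N + 1; (iii) 1/λ_N ≥ 1 + N/2, so λ_N ≤ 2/(N+2) = O(1/N); and (iv) λ_k^{−2}(1 − λ_k) = λ_{k−1}^{−2} for all k ≥ 1 (with the convention that (1−λ₀)/λ₀² = 0). -/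
/-- properties of the FISTA inertial parameter recursion
`λ₀ = 1`, `λ_{k+1} = 2λ_k/(λ_k + √(4 + λ_k²))`. -/
theorem fista_parameter_recursion
    (lam : ℕ → ℝ) (h0 : lam 0 = 1)
    (hrec : ∀ k, lam (k + 1) = 2 * lam k / (lam k + Real.sqrt (4 + lam k ^ 2))) :
    -- (i) λ_N ∈ (0, 1]
    (∀ N, 0 < lam N ∧ lam N ≤ 1) ∧
    -- (ii) 1/λ_{k+1} = (1 + √(1 + 4/λ_k²))/2 ≤ 1 + 1/λ_k, hence 1/λ_N ≤ N + 1
    (∀ k, 1 / lam (k + 1) = (1 + Real.sqrt (1 + 4 / lam k ^ 2)) / 2) ∧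
    (∀ k, 1 / lam (k + 1) ≤ 1 + 1 / lam k) ∧
    (∀ N : ℕ, 1 / lam N ≤ N + 1) ∧
    -- (iii) 1/λ_N ≥ 1 + N/2, so λ_N ≤ 2/(N+2)
    (∀ N : ℕ, 1 + (N : ℝ) / 2 ≤ 1 / lam N) ∧
    (∀ N : ℕ, lam N ≤ 2 / ((N : ℝ) + 2)) ∧
    -- (iv) λ_k^{-2}(1 − λ_k) = λ_{k-1}^{-2} for k ≥ 1 (and (1−λ₀)/λ₀² = 0)
    ((1 - lam 0) / lam 0 ^ 2 = 0) ∧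
    (∀ k, (1 - lam (k + 1)) / lam (k + 1) ^ 2 = 1 / lam k ^ 2) := by
  have hpos : ∀ N, 0 < lam N ∧ lam N ≤ 1 := by
    intro N
    induction N with
    | zero => simp [h0]
    | succ k ih =>
      obtain ⟨hp, hl⟩ := ih
      have hs : lam k < Real.sqrt (4 + lam k ^ 2) := by
        have h1 : lam k ^ 2 < 4 + lam k ^ 2 := by linarith
        have h2 := Real.sqrt_lt_sqrt (by positivity) h1
        rwa [Real.sqrt_sq hp.le] at h2
      have hden : 0 < lam k + Real.sqrt (4 + lam k ^ 2) := by linarith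
      rw [hrec k]
      constructor
      · positivity
      · rw [div_le_one hden]; linarith
  have hinv : ∀ k, 1 / lam (k + 1) = (1 + Real.sqrt (1 + 4 / lam k ^ 2)) / 2 := by
    intro k
    have hp := (hpos k).1
    have hsq : Real.sqrt (1 + 4 / lam k ^ 2) = Real.sqrt (4 + lam k ^ 2) / lam k := by
      rw [show (1 : ℝ) + 4 / lam k ^ 2 = (4 + lam k ^ 2) / lam k ^ 2 by field_simp; ring,
        Real.sqrt_div (by positivity), Real.sqrt_sq hp.le]
    rw [hrec k, one_div_div, hsq]
    rw [div_eq_div_iff (mul_pos two_pos hp).ne' two_ne_zero]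
    field_simp
  have hup : ∀ k, 1 / lam (k + 1) ≤ 1 + 1 / lam k := by
    intro k
    have hp := (hpos k).1
    have h4 : (0 : ℝ) ≤ 4 / lam k := by positivity
    have h1 : (1 : ℝ) + 4 / lam k ^ 2 ≤ (1 + 2 / lam k) ^ 2 := by
      have : (1 + 2 / lam k) ^ 2 = 1 + 4 / lam k + 4 / lam k ^ 2 := by
        field_simp; ring
      linarith [this]
    have h2 : Real.sqrt (1 + 4 / lam k ^ 2) ≤ 1 + 2 / lam k := by
      have := Real.sqrt_le_sqrt h1
      rwa [Real.sqrt_sq (by positivity)] at this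
    have h3 : 2 / lam k = 2 * (1 / lam k) := by ring
    rw [hinv k]; linarith
  have hN : ∀ N : ℕ, 1 / lam N ≤ N + 1 := by
    intro N
    induction N with
    | zero => simp [h0]
    | succ k ih =>
      have := hup k
      push_cast
      push_cast at ih
      linarith
  have hlowstep : ∀ k, 1 / 2 + 1 / lam k ≤ 1 / lam (k + 1) := by
    intro k
    have hp := (hpos k).1
    have h1 : (2 / lam k) ^ 2 ≤ 1 + 4 / lam k ^ 2 := by
      have : (2 / lam k) ^ 2 = 4 / lam k ^ 2 := by field_simp; ring
      linarith [this]
    have h2 : 2 / lam k ≤ Real.sqrt (1 + 4 / lam k ^ 2) := by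
      have := Real.sqrt_le_sqrt h1
      rwa [Real.sqrt_sq (by positivity)] at this
    have h3 : 2 / lam k = 2 * (1 / lam k) := by ring
    rw [hinv k]; linarith
  have hlow : ∀ N : ℕ, 1 + (N : ℝ) / 2 ≤ 1 / lam N := by
    intro N
    induction N with
    | zero => simp [h0]
    | succ k ih =>
      have := hlowstep k
      push_cast
      push_cast at ih
      linarith
  have hbound : ∀ N : ℕ, lam N ≤ 2 / ((N : ℝ) + 2) := by
    intro N
    have hp := (hpos N).1
    have h1 : lam N * (1 / lam N) = 1 := mul_one_div_cancel hp.ne'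
    rw [le_div_iff₀ (by positivity)]
    nlinarith [hlow N, mul_le_mul_of_nonneg_left (hlow N) hp.le]
  refine ⟨hpos, hinv, hup, hN, hlow, hbound, by rw [h0]; simp, ?_⟩
  intro k
  have hp := (hpos k).1
  have hp1 := (hpos (k + 1)).1
  have hs2 : Real.sqrt (1 + 4 / lam k ^ 2) ^ 2 = 1 + 4 / lam k ^ 2 :=
    Real.sq_sqrt (by positivity)
  have key : (1 / lam (k + 1)) ^ 2 - 1 / lam (k + 1) = 1 / lam k ^ 2 := by
    rw [hinv k]
    have : ((1 + Real.sqrt (1 + 4 / lam k ^ 2)) / 2) ^ 2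
        - (1 + Real.sqrt (1 + 4 / lam k ^ 2)) / 2
        = (Real.sqrt (1 + 4 / lam k ^ 2) ^ 2 - 1) / 4 := by ring
    rw [this, hs2]; ring
  rw [← key]; field_simp
end

section
/- (Generalised Opial lemma for Bregman divergences) Let X = (X_*)^* be the dual of a separable normed space X_*, M : X → ℝ convex and Gateaux differentiable with M' : X → X_* weak-*-to-weak continuous, X̂ ⊂ X non-empty, and {e_{k+1}} ⊂ X_*. Suppose: (i) all weak-* limit points of a sequence {x^k} ⊂ X belong to X̂; (ii) Σ_k max{0, ⟨e_{k+1}, x^{k+1} − x̄⟩} < ∞ for all x̄ ∈ X̂; (iii) B_M(x^{k+1}, x*) ≤ B_M(x^k, x*) + ⟨e_{k+1}, x^{k+1} − x*⟩ for all x* ∈ X̂ and k, where B_M(x,z) := M(z) − M(x) − ⟨M'(x), z−x⟩. Then any two weak-* limit points x̂, x̄ of {x^k} lie in X̂ and satisfy ⟨M'(x̂) − M'(x̄), x̂ − x̄⟩ = 0. If {x^k} is bounded, a weak-* limit point exists, and if the conclusion ⟨M'(x̂)−M'(x̄), x̂−x̄⟩ = 0 forces x̂ = x̄, then the whole sequence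 x^k converges weakly-* to a point of X̂. -/
open Filter Topology

lemma aux_RS (a b : ℕ → ℝ) (ha : ∀ k, 0 ≤ a k) (hb : ∀ k, 0 ≤ b k)
    (hs : Summable b) (hrec : ∀ k, a (k + 1) ≤ a k + b k) :
    ∃ L, Tendsto a atTop (𝓝 L) := by
  set B : ℕ → ℝ := fun k => ∑ j ∈ Finset.range k, b j with hB
  have hBle : ∀ k, B k ≤ ∑' j, b j := fun k => Summable.sum_le_tsum _ (fun i _ => hb i) hs
  have hanti : Antitone fun k => a k - B k := by
    apply antitone_nat_of_succ_le
    intro k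
    have h1 := hrec k
    have h2 : B (k + 1) = B k + b k := Finset.sum_range_succ _ _
    linarith
  have hbdd : BddBelow (Set.range fun k => a k - B k) := by
    refine ⟨-∑' j, b j, ?_⟩
    rintro _ ⟨k, rfl⟩
    have := ha k; have := hBle k
    simp only []
    linarith
  have h1 : Tendsto (fun k => a k - B k) atTop (𝓝 (⨅ k, a k - B k)) :=
    tendsto_atTop_ciInf hanti hbdd
  have h2 : Tendsto B atTop (𝓝 (∑' j, b j)) := hs.hasSum.tendsto_sum_nat
  exact ⟨_, by simpa using h1.add h2⟩

lemma aux_subgrad {Xs : Type*} [NormedAddCommGroup Xs] [NormedSpace ℝ Xs]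
    (M : WeakDual ℝ Xs → ℝ) (M' : WeakDual ℝ Xs → Xs)
    (hconv : ConvexOn ℝ Set.univ M)
    (hgat : ∀ (x h : WeakDual ℝ Xs),
      Tendsto (fun t : ℝ => (M (x + t • h) - M x) / t) (nhdsWithin 0 {0}ᶜ)
        (nhds (h (M' x))))
    (x z : WeakDual ℝ Xs) : (z - x) (M' x) ≤ M z - M x := by
  have h1 : Tendsto (fun t : ℝ => (M (x + t • (z - x)) - M x) / t) (𝓝[>] (0:ℝ))
      (𝓝 ((z - x) (M' x))) :=
    (hgat x (z - x)).mono_left (nhdsWithin_mono 0 fun t ht => ne_of_gt ht)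
  refine le_of_tendsto h1 ?_
  filter_upwards [Ioc_mem_nhdsGT_of_mem (Set.mem_Ico.2 ⟨le_refl (0:ℝ), zero_lt_one⟩)] with t ht
  obtain ⟨ht0, ht1⟩ := ht
  have hc := hconv.2 (Set.mem_univ x) (Set.mem_univ z) (by linarith : (0:ℝ) ≤ 1 - t)
    (le_of_lt ht0) (by ring)
  have hx : (1 - t) • x + t • z = x + t • (z - x) := by module
  rw [hx] at hc
  simp only [smul_eq_mul] at hc
  rw [div_le_iff₀ ht0]
  nlinarith

lemma aux_clusterPt_eq {u : ℕ → ℝ} {y L : ℝ} (hy : MapClusterPt y atTop u)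
    (hL : Tendsto u atTop (𝓝 L)) : y = L :=
  eq_of_nhds_neBot ((hy.clusterPt.mono hL) : ClusterPt y (𝓝 L))


/-- generalised Opial lemma for Bregman divergences: on the dual `X` of a
separable normed space `X_*` (with the weak-* topology), for convex Gateaux-differentiable
`M` with weak-*-to-weak continuous derivative `M'`, a sequence satisfying the quasi-Féjér
conditions has all its weak-* limit points in `X̂` with `⟨M'(x̂)−M'(x̄), x̂−x̄⟩ = 0` for any
two of them; if the sequence is bounded a limit point exists, and if the pairing condition
forces equality then the whole sequence converges weakly-*. -/
theorem opial_bregman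
    (Xs : Type*) [NormedAddCommGroup Xs] [NormedSpace ℝ Xs]
    [TopologicalSpace.SeparableSpace Xs]
    (M : WeakDual ℝ Xs → ℝ) (M' : WeakDual ℝ Xs → Xs)
    (hconv : ConvexOn ℝ Set.univ M)
    (hgat : ∀ (x h : WeakDual ℝ Xs),
      Tendsto (fun t : ℝ => (M (x + t • h) - M x) / t) (nhdsWithin 0 {0}ᶜ)
        (nhds (h (M' x))))
    (hwcont : ∀ g : StrongDual ℝ Xs, Continuous fun x => g (M' x))
    (Xhat : Set (WeakDual ℝ Xs)) (hne : Xhat.Nonempty)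
    (e : ℕ → Xs) (xs : ℕ → WeakDual ℝ Xs)
    -- (i) all weak-* limit points of the sequence belong to X̂
    (hlimit : ∀ x : WeakDual ℝ Xs, MapClusterPt x atTop xs → x ∈ Xhat)
    -- (ii) summability of the positive parts of the error pairings
    (hsum : ∀ xbar ∈ Xhat,
      Summable (fun k => max 0 ((xs (k + 1) - xbar) (e k))))
    -- (iii) quasi-Féjér monotonicity of the Bregman divergences with error
    (hmono : ∀ xstar ∈ Xhat, ∀ k : ℕ,
      M xstar - M (xs (k + 1)) - (xstar - xs (k + 1)) (M' (xs (k + 1)))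
        ≤ M xstar - M (xs k) - (xstar - xs k) (M' (xs k))
          + (xs (k + 1) - xstar) (e k)) :
    -- any two weak-* limit points lie in X̂ and pair to zero
    (∀ xhat xbar : WeakDual ℝ Xs,
      MapClusterPt xhat atTop xs → MapClusterPt xbar atTop xs →
      xhat ∈ Xhat ∧ xbar ∈ Xhat ∧ (xhat - xbar) (M' xhat - M' xbar) = 0) ∧
    -- if the sequence is bounded, a weak-* limit point exists
    ((∃ C : ℝ, ∀ (k : ℕ) (f : Xs), |xs k f| ≤ C * ‖f‖) →
      ∃ xhat : WeakDual ℝ Xs, MapClusterPt xhat atTop xs) ∧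
    -- with uniqueness from the pairing condition, the whole sequence converges weakly-*
    ((∃ C : ℝ, ∀ (k : ℕ) (f : Xs), |xs k f| ≤ C * ‖f‖) →
      (∀ xhat xbar : WeakDual ℝ Xs,
        (xhat - xbar) (M' xhat - M' xbar) = 0 → xhat = xbar) →
      ∃ xhat ∈ Xhat, Tendsto xs atTop (nhds xhat)) := by
  -- convergence of the Bregman divergences for each point of X̂
  have key : ∀ xstar ∈ Xhat, ∃ L,
      Tendsto (fun k => M xstar - M (xs k) - (xstar - xs k) (M' (xs k))) atTop (𝓝 L) := by
    intro xstar hx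
    refine aux_RS _ (fun k => max 0 ((xs (k + 1) - xstar) (e k))) ?_ ?_ (hsum xstar hx) ?_
    · intro k
      have := aux_subgrad M M' hconv hgat (xs k) xstar
      linarith
    · intro k; exact le_max_left _ _
    · intro k
      have h1 := hmono xstar hx k
      have h2 := le_max_right 0 ((xs (k + 1) - xstar) (e k))
      linarith
  -- Part 1
  have part1 : ∀ xhat xbar : WeakDual ℝ Xs,
      MapClusterPt xhat atTop xs → MapClusterPt xbar atTop xs →
      xhat ∈ Xhat ∧ xbar ∈ Xhat ∧ (xhat - xbar) (M' xhat - M' xbar) = 0 := by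
    intro xhat xbar h1 h2
    have hx1 : xhat ∈ Xhat := hlimit _ h1
    have hx2 : xbar ∈ Xhat := hlimit _ h2
    refine ⟨hx1, hx2, ?_⟩
    obtain ⟨L1, hL1⟩ := key xhat hx1
    obtain ⟨L2, hL2⟩ := key xbar hx2
    have heq : ∀ k, (M xhat - M (xs k) - (xhat - xs k) (M' (xs k)))
        - (M xbar - M (xs k) - (xbar - xs k) (M' (xs k)))
        = (M xhat - M xbar) - (xhat - xbar) (M' (xs k)) := by
      intro k
      have e1 : (xhat - xs k) (M' (xs k)) = xhat (M' (xs k)) - xs k (M' (xs k)) := rfl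
      have e2 : (xbar - xs k) (M' (xs k)) = xbar (M' (xs k)) - xs k (M' (xs k)) := rfl
      have e3 : (xhat - xbar) (M' (xs k)) = xhat (M' (xs k)) - xbar (M' (xs k)) := rfl
      rw [e1, e2, e3]; ring
    have h' : Tendsto (fun k => (M xhat - M xbar) - (xhat - xbar) (M' (xs k)))
        atTop (𝓝 (L1 - L2)) := (hL1.sub hL2).congr heq
    have hphi : Tendsto (fun k => (xhat - xbar) (M' (xs k))) atTop
        (𝓝 ((M xhat - M xbar) - (L1 - L2))) := by
      have := (tendsto_const_nhds (x := M xhat - M xbar) (f := atTop)).sub h'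
      simpa using this
    set g : StrongDual ℝ Xs := WeakDual.toStrongDual (xhat - xbar) with hg
    have hc : Continuous fun x : WeakDual ℝ Xs => g (M' x) := hwcont g
    have c1 : MapClusterPt (g (M' xhat)) atTop ((fun x => g (M' x)) ∘ xs) :=
      MapClusterPt.continuousAt_comp (f := fun x : WeakDual ℝ Xs => g (M' x)) hc.continuousAt h1
    have c2 : MapClusterPt (g (M' xbar)) atTop ((fun x => g (M' x)) ∘ xs) :=
      MapClusterPt.continuousAt_comp (f := fun x : WeakDual ℝ Xs => g (M' x)) hc.continuousAt h2
    have c1' : MapClusterPt ((xhat - xbar) (M' xhat)) atTop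
        (fun k => (xhat - xbar) (M' (xs k))) := c1
    have c2' : MapClusterPt ((xhat - xbar) (M' xbar)) atTop
        (fun k => (xhat - xbar) (M' (xs k))) := c2
    have e1 := aux_clusterPt_eq c1' hphi
    have e2 := aux_clusterPt_eq c2' hphi
    have : (xhat - xbar) (M' xhat - M' xbar)
        = (xhat - xbar) (M' xhat) - (xhat - xbar) (M' xbar) := map_sub _ _ _
    rw [this, e1, e2, sub_self]
  -- compact set containing the sequence
  have hcompact : (∃ C : ℝ, ∀ (k : ℕ) (f : Xs), |xs k f| ≤ C * ‖f‖) →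
      ∃ K : Set (WeakDual ℝ Xs), IsCompact K ∧ ∀ k, xs k ∈ K := by
    rintro ⟨C, hC⟩
    refine ⟨_, WeakDual.isCompact_closedBall (𝕜 := ℝ) (E := Xs) 0 (max C 0), fun k => ?_⟩
    simp only [Set.mem_preimage, Metric.mem_closedBall, dist_zero_right]
    refine ContinuousLinearMap.opNorm_le_bound _ (le_max_right C 0) fun f => ?_
    calc ‖WeakDual.toStrongDual (xs k) f‖ = |xs k f| := rfl
      _ ≤ C * ‖f‖ := hC k f
      _ ≤ max C 0 * ‖f‖ := mul_le_mul_of_nonneg_right (le_max_left _ _) (norm_nonneg f)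
  have part2 : (∃ C : ℝ, ∀ (k : ℕ) (f : Xs), |xs k f| ≤ C * ‖f‖) →
      ∃ xhat : WeakDual ℝ Xs, MapClusterPt xhat atTop xs := by
    intro hb
    obtain ⟨K, hK, hmem⟩ := hcompact hb
    obtain ⟨x, _, hx⟩ := hK.exists_mapClusterPt (f := atTop) (u := xs)
      (le_principal_iff.2 (mem_map.2 (Eventually.of_forall hmem)))
    exact ⟨x, hx⟩
  refine ⟨part1, part2, ?_⟩
  intro hb huniq
  obtain ⟨K, hK, hmem⟩ := hcompact hb
  obtain ⟨xhat, hcl⟩ := part2 hb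
  refine ⟨xhat, hlimit _ hcl, ?_⟩
  exact hK.tendsto_nhds_of_unique_mapClusterPt (Eventually.of_forall hmem)
    fun y _ hy => huniq y xhat (part1 y xhat hy hcl).2.2
end
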